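/- Define τ(z_1, z_2) = (1 - γ(z_1 + z_2) + 2γ²z_1z_2) / ((1 - γz_1)(1 - γz_2)(1 + γ²z_1z_2)). Then τ(z_1, z_2) → 0 as z_1 = z_2 → -∞, and the refined-scheme stability function R(z_1, z_2, iw) = 1 + (iwb + zb̂)ᵀ (τ^{-1}I - iwA - zÂ)^{-1} 1 with z = z_1 + z_2 tends to 1 as z_1 = z_2 → -∞. -/

import Mathlib

open Matrix Filter Topology

private lemma inv_tendsto_atBot' : Tendsto (fun t : ℝ => t⁻¹) atBot (𝓝 0) := by
  have h := (tendsto_inv_atTop_zero (𝕜 := ℝ)).comp tendsto_neg_atBot_atTop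
  have h2 := h.neg
  simp only [neg_zero] at h2
  refine h2.congr fun t => ?_
  simp [Function.comp, inv_neg]

/-- Weak stability of the one-refinement LIRK+AMF scheme:
`τ(z₁,z₂) = (1 - γ(z₁+z₂) + 2γ²z₁z₂)/((1-γz₁)(1-γz₂)(1+γ²z₁z₂)) → 0` as `z₁ = z₂ → -∞`,
and the refined stability function
`R(z₁,z₂,iw) = 1 + (iwb + zb̂)ᵀ(τ⁻¹I - iwA - zÂ)⁻¹𝟙` (with `z = z₁+z₂`) tends to `1`. -/
theorem lirk_amf_refined_weak_stability {s : ℕ}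
    (A Ahat : Matrix (Fin s) (Fin s) ℝ) (b bhat : Fin s → ℝ) (γ w : ℝ) (hγ : 0 < γ)
    (τ : ℝ → ℝ → ℝ)
    (hτ : ∀ z₁ z₂ : ℝ, τ z₁ z₂ =
      (1 - γ * (z₁ + z₂) + 2 * γ ^ 2 * z₁ * z₂) /
        ((1 - γ * z₁) * (1 - γ * z₂) * (1 + γ ^ 2 * z₁ * z₂)))
    (M : ℝ → ℝ → Matrix (Fin s) (Fin s) ℂ)
    (hM : ∀ z₁ z₂ : ℝ, M z₁ z₂ =
      (((τ z₁ z₂)⁻¹ : ℝ) : ℂ) • (1 : Matrix (Fin s) (Fin s) ℂ)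
        - ((w : ℂ) * Complex.I) • A.map Complex.ofReal
        - ((z₁ + z₂ : ℝ) : ℂ) • Ahat.map Complex.ofReal)
    (hinv : ∀ z₁ z₂ : ℝ, z₁ < 0 → z₂ < 0 → IsUnit (M z₁ z₂).det)
    (R : ℝ → ℝ → ℂ)
    (hR : ∀ z₁ z₂ : ℝ, R z₁ z₂ =
      1 + (fun i => (w : ℂ) * Complex.I * (b i : ℂ) + ((z₁ + z₂ : ℝ) : ℂ) * (bhat i : ℂ)) ⬝ᵥ
        ((M z₁ z₂)⁻¹ *ᵥ fun _ => 1)) :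
    Tendsto (fun t : ℝ => τ t t) atBot (nhds 0) ∧
      Tendsto (fun t : ℝ => R t t) atBot (nhds 1) := by
  -- basic positivity facts for t < 0
  have hposfacts : ∀ t : ℝ, t < 0 →
      0 < (1 - γ * t) * (1 - γ * t) * (1 + γ ^ 2 * t * t) ∧
      0 < 1 - γ * (t + t) + 2 * γ ^ 2 * t * t := by
    intro t ht
    have a1 : (0:ℝ) < 1 - γ * t := by nlinarith
    have a2 : (0:ℝ) < 1 + γ ^ 2 * t * t := by
      nlinarith [mul_pos (mul_pos hγ hγ) (mul_pos_of_neg_of_neg ht ht)]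
    exact ⟨mul_pos (mul_pos a1 a1) a2, by nlinarith⟩
  have hτpos : ∀ t : ℝ, t < 0 → 0 < τ t t := by
    intro t ht
    rw [hτ t t]
    exact div_pos (hposfacts t ht).2 (hposfacts t ht).1
  -- nonvanishing of the substituted denominator
  have hden : ∀ t : ℝ, t < 0 → 0 < (t⁻¹ - γ)^2 * ((t⁻¹)^2 + γ^2) := by
    intro t ht
    have hb : t⁻¹ - γ < 0 := by
      have : t⁻¹ < 0 := inv_neg''.mpr ht
      linarith
    have h2' : (0:ℝ) < (t⁻¹ - γ)^2 := by nlinarith [mul_pos_of_neg_of_neg hb hb]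
    have h3' : (0:ℝ) < (t⁻¹)^2 + γ^2 := by positivity
    exact mul_pos h2' h3'
  have hne0 : ((0:ℝ) - γ)^2 * ((0:ℝ)^2 + γ^2) ≠ 0 := by
    have h4 : ((0:ℝ) - γ)^2 * ((0:ℝ)^2 + γ^2) = γ^4 := by ring
    rw [h4]; positivity
  -- limit of τ t t
  have hP : Tendsto (fun u : ℝ => (u^4 - 2*γ*u^3 + 2*γ^2*u^2) / ((u - γ)^2 * (u^2 + γ^2)))
      (𝓝 0) (𝓝 0) := by
    have hc : ContinuousAt
        (fun u : ℝ => (u^4 - 2*γ*u^3 + 2*γ^2*u^2) / ((u - γ)^2 * (u^2 + γ^2))) 0 :=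
      ContinuousAt.div (by fun_prop) (by fun_prop) hne0
    simpa using hc.tendsto
  have hτ0 : Tendsto (fun t : ℝ => τ t t) atBot (𝓝 0) := by
    refine ((hP.comp inv_tendsto_atBot').congr' ?_)
    filter_upwards [eventually_lt_atBot (0:ℝ)] with t ht
    have htne : t ≠ 0 := ht.ne
    rw [Function.comp_apply, hτ t t, eq_comm,
      div_eq_div_iff (hposfacts t ht).1.ne' (hden t ht).ne']
    field_simp
    ring
  -- limit of t * τ t t
  have hS : Tendsto (fun u : ℝ => (u^3 - 2*γ*u^2 + 2*γ^2*u) / ((u - γ)^2 * (u^2 + γ^2)))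
      (𝓝 0) (𝓝 0) := by
    have hc : ContinuousAt
        (fun u : ℝ => (u^3 - 2*γ*u^2 + 2*γ^2*u) / ((u - γ)^2 * (u^2 + γ^2))) 0 :=
      ContinuousAt.div (by fun_prop) (by fun_prop) hne0
    simpa using hc.tendsto
  have htτ0 : Tendsto (fun t : ℝ => t * τ t t) atBot (𝓝 0) := by
    refine ((hS.comp inv_tendsto_atBot').congr' ?_)
    filter_upwards [eventually_lt_atBot (0:ℝ)] with t ht
    have htne : t ≠ 0 := ht.ne
    rw [Function.comp_apply, hτ t t, mul_div_assoc', eq_comm,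
      div_eq_div_iff (hposfacts t ht).1.ne' (hden t ht).ne']
    field_simp
    ring
  refine ⟨hτ0, ?_⟩
  -- complex versions of the scalar limits
  have hcτ : Tendsto (fun t : ℝ => ((τ t t : ℝ) : ℂ)) atBot (𝓝 0) := by
    have := (Complex.continuous_ofReal.tendsto 0).comp hτ0
    simpa [Function.comp_def] using this
  have hctτ : Tendsto (fun t : ℝ => ((t:ℝ) : ℂ) * ((τ t t : ℝ) : ℂ)) atBot (𝓝 0) := by
    have h := (Complex.continuous_ofReal.tendsto 0).comp htτ0
    rw [Complex.ofReal_zero] at h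
    exact h.congr fun t => by simp only [Function.comp_apply]; push_cast; ring
  -- the renormalized matrix N t := τ • M tends to 1
  have hNlim : Tendsto (fun t : ℝ => ((τ t t : ℝ) : ℂ) • M t t) atBot
      (𝓝 (1 : Matrix (Fin s) (Fin s) ℂ)) := by
    refine tendsto_pi_nhds.mpr ?_
    intro i
    refine tendsto_pi_nhds.mpr ?_
    intro j
    have hg : Tendsto (fun t : ℝ =>
        (1 : Matrix (Fin s) (Fin s) ℂ) i j
          - ((w : ℂ) * Complex.I * A.map Complex.ofReal i j) * ((τ t t : ℝ) : ℂ)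
          - (2 * Ahat.map Complex.ofReal i j) * (((t:ℝ) : ℂ) * ((τ t t : ℝ) : ℂ)))
        atBot (𝓝 ((1 : Matrix (Fin s) (Fin s) ℂ) i j)) := by
      have := (tendsto_const_nhds (x := (1 : Matrix (Fin s) (Fin s) ℂ) i j)
          (f := atBot (α := ℝ))).sub
        ((hcτ.const_mul ((w : ℂ) * Complex.I * A.map Complex.ofReal i j)).add
          (hctτ.const_mul (2 * Ahat.map Complex.ofReal i j)))
      simpa [sub_add_eq_sub_sub] using this
    refine hg.congr' ?_
    filter_upwards [eventually_lt_atBot (0:ℝ)] with t ht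
    have hτne : ((τ t t : ℝ) : ℂ) ≠ 0 := by
      exact_mod_cast Complex.ofReal_ne_zero.mpr (hτpos t ht).ne'
    rw [hM t t]
    simp only [Matrix.smul_apply, Matrix.sub_apply, smul_eq_mul, Complex.ofReal_inv,
      Complex.ofReal_mul]
    push_cast
    field_simp
    ring
  -- inverse of N tends to 1
  have hRinv : ContinuousAt Ring.inverse ((1 : Matrix (Fin s) (Fin s) ℂ)).det := by
    rw [Matrix.det_one, Ring.inverse_eq_inv']
    exact continuousAt_inv₀ one_ne_zero
  have hNinv : Tendsto (fun t : ℝ => (((τ t t : ℝ) : ℂ) • M t t)⁻¹) atBot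
      (𝓝 (1 : Matrix (Fin s) (Fin s) ℂ)) := by
    have := (continuousAt_matrix_inv _ hRinv).tendsto.comp hNlim
    simpa [Function.comp_def] using this
  -- components of N⁻¹ *ᵥ 1 tend to 1
  have hU : ∀ i : Fin s, Tendsto
      (fun t : ℝ => ((((τ t t : ℝ) : ℂ) • M t t)⁻¹ *ᵥ fun _ => (1:ℂ)) i) atBot (𝓝 1) := by
    intro i
    have hsum : Tendsto (fun t : ℝ => ∑ j, (((τ t t : ℝ) : ℂ) • M t t)⁻¹ i j) atBot
        (𝓝 (∑ j, (1 : Matrix (Fin s) (Fin s) ℂ) i j)) := by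
      refine tendsto_finset_sum _ fun j _ => ?_
      exact (tendsto_pi_nhds.mp (tendsto_pi_nhds.mp hNinv i) j)
    have h1 : (∑ j, (1 : Matrix (Fin s) (Fin s) ℂ) i j) = 1 := by
      simp [Matrix.one_apply]
    rw [h1] at hsum
    refine hsum.congr fun t => ?_
    simp [Matrix.mulVec, dotProduct]
  -- the target auxiliary function
  have hG : Tendsto (fun t : ℝ => 1 + ∑ i,
      (((w : ℂ) * Complex.I * (b i : ℂ)) * ((τ t t : ℝ) : ℂ)
        + (2 * (bhat i : ℂ)) * (((t:ℝ) : ℂ) * ((τ t t : ℝ) : ℂ)))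
      * ((((τ t t : ℝ) : ℂ) • M t t)⁻¹ *ᵥ fun _ => (1:ℂ)) i) atBot (𝓝 1) := by
    have hsum : Tendsto (fun t : ℝ => ∑ i,
        (((w : ℂ) * Complex.I * (b i : ℂ)) * ((τ t t : ℝ) : ℂ)
          + (2 * (bhat i : ℂ)) * (((t:ℝ) : ℂ) * ((τ t t : ℝ) : ℂ)))
        * ((((τ t t : ℝ) : ℂ) • M t t)⁻¹ *ᵥ fun _ => (1:ℂ)) i) atBot (𝓝 0) := by
      have := tendsto_finset_sum (Finset.univ : Finset (Fin s)) fun i _ =>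
        (((hcτ.const_mul ((w : ℂ) * Complex.I * (b i : ℂ))).add
          (hctτ.const_mul (2 * (bhat i : ℂ)))).mul (hU i))
      simpa using this
    have := (tendsto_const_nhds (x := (1:ℂ)) (f := atBot (α := ℝ))).add hsum
    simpa using this
  refine hG.congr' ?_
  filter_upwards [eventually_lt_atBot (0:ℝ)] with t ht
  have hτne : ((τ t t : ℝ) : ℂ) ≠ 0 := Complex.ofReal_ne_zero.mpr (hτpos t ht).ne'
  -- M⁻¹ = τ • N⁻¹
  have hsm : (M t t)⁻¹ = ((τ t t : ℝ) : ℂ) • (((τ t t : ℝ) : ℂ) • M t t)⁻¹ := by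
    letI := invertibleOfNonzero hτne
    rw [Matrix.inv_smul (A := M t t) ((τ t t : ℝ) : ℂ) (hinv t t ht ht), smul_smul, mul_invOf_self, one_smul]
  rw [hR t t, hsm, Matrix.smul_mulVec]
  congr 1
  simp only [dotProduct, Pi.smul_apply, smul_eq_mul, Complex.ofReal_mul]
  refine Finset.sum_congr rfl fun i _ => ?_
  push_cast
  ring
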